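/- Let 0 < α < 1/2 and define f(s) = ln(α e^{s(1−α)} + (1−α) e^{−sα}). Then, besides the trivial solutions (σ, 0) with arbitrary σ > 0, the system of equations f(s) = σ²s²/2 and f′(s) = σ²s has exactly one solution (σ*, s*) with σ* > 0 and s* ≠ 0, this solution has s* > 0, and the sub-Gaussian norm of a Bernoulli(α) random variable equals σ*. -/

import Mathlib

open MeasureTheory Real

/-- The Bernoulli(α) measure on `ℝ`: mass `α` at `1` and mass `1 - α` at `0`. -/
noncomputable def bernoulliMeasure (α : ℝ) : Measure ℝ :=
  (ENNReal.ofReal α) • Measure.dirac 1 + (ENNReal.ofReal (1 - α)) • Measure.dirac 0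

/-- The sub-Gaussian norm of `X` under `P`: the infimum of all `σ > 0` such that
`E_P[exp (s (X - E_P X))] ≤ exp (σ² s² / 2)` for all real `s`. -/
noncomputable def subGaussianNorm {Ω : Type*} [MeasurableSpace Ω] (P : Measure Ω)
    (X : Ω → ℝ) : ℝ :=
  sInf {σ : ℝ | 0 < σ ∧ ∀ s : ℝ,
    ∫ ω, Real.exp (s * (X ω - ∫ ω', X ω' ∂P)) ∂P ≤ Real.exp (σ ^ 2 * s ^ 2 / 2)}

/-- The centered cumulant generating function of a Bernoulli(α) random variable:
`f(s) = ln (α e^{s(1-α)} + (1-α) e^{-sα})`. -/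
noncomputable def bernoulliCGF (α : ℝ) (s : ℝ) : ℝ :=
  Real.log (α * Real.exp (s * (1 - α)) + (1 - α) * Real.exp (-s * α))

noncomputable def bD (α s : ℝ) : ℝ := α * Real.exp s + (1 - α)
noncomputable def bp (α s : ℝ) : ℝ := α * Real.exp s / bD α s
noncomputable def bF (α s : ℝ) : ℝ := Real.log (bD α s) - α * s
noncomputable def bT (α : ℝ) : ℝ := Real.log ((1 - α) / α)
noncomputable def bpsi (α s : ℝ) : ℝ := s * (bp α s - α) - 2 * bF α s
noncomputable def bpsiD (α s : ℝ) : ℝ := s * (bp α s * (1 - bp α s)) - (bp α s - α)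
noncomputable def bb (α : ℝ) : ℝ := (1 - 2 * α) / (2 * bT α)

lemma bD_pos {α : ℝ} (h0 : 0 < α) (h1 : α < 1) (s : ℝ) : 0 < bD α s := by
  have h2 := Real.exp_pos s
  have h3 : 0 < α * Real.exp s := mul_pos h0 h2
  unfold bD; linarith

lemma bCGF_eq {α : ℝ} (h0 : 0 < α) (h1 : α < 1) : bernoulliCGF α = bF α := by
  funext s
  unfold bernoulliCGF bF
  have h2 : α * Real.exp (s * (1 - α)) + (1 - α) * Real.exp (-s * α)
      = Real.exp (-(α * s)) * bD α s := by
    unfold bD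
    have e1 : s * (1 - α) = s + -(α * s) := by ring
    have e2 : -s * α = -(α * s) := by ring
    rw [e1, e2, Real.exp_add]; ring
  rw [h2, Real.log_mul (Real.exp_ne_zero _) (ne_of_gt (bD_pos h0 h1 s)), Real.log_exp]
  ring

lemma hasDerivAt_bD (α s : ℝ) : HasDerivAt (bD α) (α * Real.exp s) s := by
  exact ((Real.hasDerivAt_exp s).const_mul α).add_const (1 - α)

lemma hasDerivAt_bF {α : ℝ} (h0 : 0 < α) (h1 : α < 1) (s : ℝ) :
    HasDerivAt (bF α) (bp α s - α) s := by
  have h := ((hasDerivAt_bD α s).log (ne_of_gt (bD_pos h0 h1 s))).sub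
    ((hasDerivAt_id s).const_mul α)
  refine h.congr_deriv ?_
  simp [bp]

lemma bp_pos {α : ℝ} (h0 : 0 < α) (h1 : α < 1) (s : ℝ) : 0 < bp α s :=
  div_pos (mul_pos h0 (Real.exp_pos s)) (bD_pos h0 h1 s)

lemma bp_lt_one {α : ℝ} (h0 : 0 < α) (h1 : α < 1) (s : ℝ) : bp α s < 1 := by
  rw [bp, div_lt_one (bD_pos h0 h1 s)]
  unfold bD; linarith

lemma hasDerivAt_bp {α : ℝ} (h0 : 0 < α) (h1 : α < 1) (s : ℝ) :
    HasDerivAt (bp α) (bp α s * (1 - bp α s)) s := by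
  have h := ((Real.hasDerivAt_exp s).const_mul α).div (hasDerivAt_bD α s)
    (ne_of_gt (bD_pos h0 h1 s))
  refine h.congr_deriv ?_
  have hD := ne_of_gt (bD_pos h0 h1 s)
  unfold bp
  field_simp

lemma hasDerivAt_bpsi {α : ℝ} (h0 : 0 < α) (h1 : α < 1) (s : ℝ) :
    HasDerivAt (bpsi α) (bpsiD α s) s := by
  have h := ((hasDerivAt_id s).mul ((hasDerivAt_bp h0 h1 s).sub_const α)).sub
    ((hasDerivAt_bF h0 h1 s).const_mul 2)
  refine h.congr_deriv ?_
  unfold bpsiD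
  simp only [id_eq]
  ring

lemma hasDerivAt_bpsiD {α : ℝ} (h0 : 0 < α) (h1 : α < 1) (s : ℝ) :
    HasDerivAt (bpsiD α) (s * (bp α s * (1 - bp α s)) * (1 - 2 * bp α s)) s := by
  have hp := hasDerivAt_bp h0 h1 s
  have h := ((hasDerivAt_id s).mul (hp.mul ((hasDerivAt_const s (1:ℝ)).sub hp))).sub
    (hp.sub_const α)
  refine h.congr_deriv ?_
  simp only [id_eq, Pi.mul_apply, Pi.sub_apply]
  ring

lemma bp_zero {α : ℝ} : bp α 0 = α := by simp [bp, bD]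

lemma bF_zero {α : ℝ} : bF α 0 = 0 := by simp [bF, bD]

lemma bpsi_zero {α : ℝ} : bpsi α 0 = 0 := by simp [bpsi, bF, bD]

lemma bpsiD_zero {α : ℝ} : bpsiD α 0 = 0 := by simp [bpsiD, bp_zero]

lemma bT_pos {α : ℝ} (h0 : 0 < α) (h2 : α < 1/2) : 0 < bT α := by
  apply Real.log_pos
  rw [lt_div_iff₀ h0]; linarith

lemma exp_bT {α : ℝ} (h0 : 0 < α) (h2 : α < 1/2) : Real.exp (bT α) = (1 - α)/α := by
  apply Real.exp_log
  apply div_pos (by linarith) h0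

lemma bp_lt_half {α s : ℝ} (h0 : 0 < α) (h2 : α < 1/2) (hs : s < bT α) : bp α s < 1/2 := by
  have h1 : α < 1 := by linarith
  have he : Real.exp s < (1 - α)/α := by
    rw [← exp_bT h0 h2]; exact Real.exp_lt_exp.mpr hs
  have he' : α * Real.exp s < 1 - α := by
    rw [lt_div_iff₀ h0] at he; nlinarith [Real.exp_pos s]
  rw [bp, div_lt_iff₀ (bD_pos h0 h1 s)]
  unfold bD; linarith

lemma half_lt_bp {α s : ℝ} (h0 : 0 < α) (h2 : α < 1/2) (hs : bT α < s) : 1/2 < bp α s := by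
  have h1 : α < 1 := by linarith
  have he : (1 - α)/α < Real.exp s := by
    rw [← exp_bT h0 h2]; exact Real.exp_lt_exp.mpr hs
  have he' : 1 - α < α * Real.exp s := by
    rw [div_lt_iff₀ h0] at he; nlinarith
  rw [bp, lt_div_iff₀ (bD_pos h0 h1 s)]
  unfold bD; linarith

lemma bp_lt_alpha {α s : ℝ} (h0 : 0 < α) (h1 : α < 1) (hs : s < 0) : bp α s < α := by
  have he : Real.exp s < 1 := Real.exp_lt_one_iff.mpr hs
  rw [bp, div_lt_iff₀ (bD_pos h0 h1 s)]
  unfold bD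
  have hkey : α * (1-α) * Real.exp s < α * (1-α) := by
    nlinarith [mul_pos (mul_pos h0 (by linarith : (0:ℝ) < 1-α)) (sub_pos.mpr he)]
  nlinarith

lemma exp_two_bT {α : ℝ} (h0 : 0 < α) (h2 : α < 1/2) :
    Real.exp (2 * bT α) = ((1 - α)/α)^2 := by
  rw [two_mul, Real.exp_add, exp_bT h0 h2]; ring

lemma bD_two {α : ℝ} (h0 : 0 < α) (h2 : α < 1/2) : bD α (2 * bT α) = (1 - α)/α := by
  unfold bD
  rw [exp_two_bT h0 h2]
  field_simp
  ring

lemma bp_two {α : ℝ} (h0 : 0 < α) (h2 : α < 1/2) : bp α (2 * bT α) = 1 - α := by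
  unfold bp
  rw [exp_two_bT h0 h2, bD_two h0 h2]
  have h1 : (1:ℝ) - α > 0 := by linarith
  field_simp

lemma bF_two {α : ℝ} (h0 : 0 < α) (h2 : α < 1/2) : bF α (2 * bT α) = bT α * (1 - 2*α) := by
  unfold bF
  rw [bD_two h0 h2]
  show bT α - α * (2 * bT α) = bT α * (1 - 2*α)
  ring

lemma bpsi_two {α : ℝ} (h0 : 0 < α) (h2 : α < 1/2) : bpsi α (2 * bT α) = 0 := by
  unfold bpsi
  rw [bp_two h0 h2, bF_two h0 h2]
  ring

lemma log_lt_aux {t : ℝ} (ht : 1 < t) : Real.log t < (t^2 - 1)/(2*t) := by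
  set q : ℝ → ℝ := fun x => (x^2 - 1)/(2*x) - Real.log x with hq
  have hder : ∀ x : ℝ, 0 < x → HasDerivAt q ((x-1)^2/(2*x^2)) x := by
    intro x hx
    have h1 : HasDerivAt (fun y : ℝ => (y^2 - 1)/(2*y))
        ((2*x * (2*x) - (x^2-1)*2)/(2*x)^2) x := by
      exact (((hasDerivAt_pow 2 x).sub_const 1).div ((hasDerivAt_id x).const_mul 2)
        (by positivity)).congr_deriv (by simp)
    have h2 : HasDerivAt Real.log (1/x) x := by
      simpa [one_div] using Real.hasDerivAt_log (ne_of_gt hx)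
    have := h1.sub h2
    refine this.congr_deriv ?_
    field_simp
    ring
  have hmono : StrictMonoOn q (Set.Ici 1) := by
    apply strictMonoOn_of_deriv_pos (convex_Ici 1)
    · intro x hx
      exact (hder x (lt_of_lt_of_le one_pos hx)).continuousAt.continuousWithinAt
    · intro x hx
      rw [interior_Ici] at hx
      have hx0 : (0:ℝ) < x := lt_trans one_pos hx
      rw [(hder x hx0).deriv]
      have hx1 : 1 < x := hx
      have : x - 1 ≠ 0 := by intro h; nlinarith
      positivity
  have h1 : q 1 = 0 := by simp [hq]
  have := hmono (Set.self_mem_Ici) (Set.mem_Ici.mpr ht.le) ht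
  rw [h1] at this
  simp only [hq] at this
  linarith

lemma twoT_mul_lt {α : ℝ} (h0 : 0 < α) (h2 : α < 1/2) :
    2 * bT α * (α * (1 - α)) < 1 - 2*α := by
  have h1 : (0:ℝ) < 1 - α := by linarith
  have ht : 1 < (1 - α)/α := by rw [lt_div_iff₀ h0]; linarith
  have hlog := log_lt_aux ht
  have hkey : (((1-α)/α)^2 - 1)/(2*((1-α)/α)) = (1 - 2*α)/(2*α*(1-α)) := by
    field_simp
    ring
  rw [hkey] at hlog
  have hbT : bT α = Real.log ((1-α)/α) := rfl
  rw [← hbT] at hlog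
  have hpos : (0:ℝ) < 2*α*(1-α) := by positivity
  rw [lt_div_iff₀ hpos] at hlog
  nlinarith

lemma bb_pos {α : ℝ} (h0 : 0 < α) (h2 : α < 1/2) : 0 < bb α :=
  div_pos (by linarith) (by linarith [bT_pos h0 h2])

lemma alpha_mul_lt_bb {α : ℝ} (h0 : 0 < α) (h2 : α < 1/2) : α * (1 - α) < bb α := by
  rw [bb, lt_div_iff₀ (by linarith [bT_pos h0 h2] : (0:ℝ) < 2 * bT α)]
  nlinarith [twoT_mul_lt h0 h2]

lemma bpsiD_two_neg {α : ℝ} (h0 : 0 < α) (h2 : α < 1/2) : bpsiD α (2 * bT α) < 0 := by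
  unfold bpsiD
  rw [bp_two h0 h2]
  nlinarith [twoT_mul_lt h0 h2]

lemma bpsiD_cont {α : ℝ} (h0 : 0 < α) (h1 : α < 1) (S : Set ℝ) :
    ContinuousOn (bpsiD α) S :=
  fun x _ => (hasDerivAt_bpsiD h0 h1 x).continuousAt.continuousWithinAt

lemma bpsi_cont {α : ℝ} (h0 : 0 < α) (h1 : α < 1) (S : Set ℝ) :
    ContinuousOn (bpsi α) S :=
  fun x _ => (hasDerivAt_bpsi h0 h1 x).continuousAt.continuousWithinAt

lemma bpp_pos {α : ℝ} (h0 : 0 < α) (h1 : α < 1) (s : ℝ) : 0 < bp α s * (1 - bp α s) :=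
  mul_pos (bp_pos h0 h1 s) (by linarith [bp_lt_one h0 h1 s])

lemma bpsiD_pos_of_neg {α s : ℝ} (h0 : 0 < α) (h2 : α < 1/2) (hs : s < 0) :
    0 < bpsiD α s := by
  have h1 : α < 1 := by linarith
  have anti : StrictAntiOn (bpsiD α) (Set.Iic 0) := by
    apply strictAntiOn_of_deriv_neg (convex_Iic 0) (bpsiD_cont h0 h1 _)
    intro x hx
    rw [interior_Iic] at hx
    have hx0 : x < 0 := hx
    rw [(hasDerivAt_bpsiD h0 h1 x).deriv]
    have hhalf : bp α x < 1/2 := bp_lt_half h0 h2 (lt_trans hx0 (bT_pos h0 h2))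
    have := bpp_pos h0 h1 x
    apply mul_neg_of_neg_of_pos
    · exact mul_neg_of_neg_of_pos hx0 this
    · linarith
  have := anti (Set.mem_Iic.mpr hs.le) (Set.mem_Iic.mpr le_rfl) hs
  rwa [bpsiD_zero] at this

lemma bpsiD_pos_of_mid {α s : ℝ} (h0 : 0 < α) (h2 : α < 1/2) (hs : 0 < s) (hs' : s ≤ bT α) :
    0 < bpsiD α s := by
  have h1 : α < 1 := by linarith
  have mono : StrictMonoOn (bpsiD α) (Set.Icc 0 (bT α)) := by
    apply strictMonoOn_of_deriv_pos (convex_Icc 0 (bT α)) (bpsiD_cont h0 h1 _)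
    intro x hx
    rw [interior_Icc] at hx
    rw [(hasDerivAt_bpsiD h0 h1 x).deriv]
    have hhalf : bp α x < 1/2 := bp_lt_half h0 h2 hx.2
    have := bpp_pos h0 h1 x
    apply mul_pos (mul_pos hx.1 this)
    linarith
  have := mono (Set.mem_Icc.mpr ⟨le_rfl, (bT_pos h0 h2).le⟩)
    (Set.mem_Icc.mpr ⟨hs.le, hs'⟩) hs
  rwa [bpsiD_zero] at this

lemma bpsiD_anti {α : ℝ} (h0 : 0 < α) (h2 : α < 1/2) :
    StrictAntiOn (bpsiD α) (Set.Ici (bT α)) := by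
  have h1 : α < 1 := by linarith
  apply strictAntiOn_of_deriv_neg (convex_Ici (bT α)) (bpsiD_cont h0 h1 _)
  intro x hx
  rw [interior_Ici] at hx
  have hxT : bT α < x := hx
  rw [(hasDerivAt_bpsiD h0 h1 x).deriv]
  have hhalf : 1/2 < bp α x := half_lt_bp h0 h2 hxT
  have hx0 : 0 < x := lt_trans (bT_pos h0 h2) hxT
  have := bpp_pos h0 h1 x
  apply mul_neg_of_pos_of_neg (mul_pos hx0 this)
  linarith

lemma bpsi_neg_of_neg {α s : ℝ} (h0 : 0 < α) (h2 : α < 1/2) (hs : s < 0) :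
    bpsi α s < 0 := by
  have h1 : α < 1 := by linarith
  have mono : StrictMonoOn (bpsi α) (Set.Iic 0) := by
    apply strictMonoOn_of_deriv_pos (convex_Iic 0) (bpsi_cont h0 h1 _)
    intro x hx
    rw [interior_Iic] at hx
    rw [(hasDerivAt_bpsi h0 h1 x).deriv]
    exact bpsiD_pos_of_neg h0 h2 hx
  have := mono (Set.mem_Iic.mpr hs.le) (Set.mem_Iic.mpr le_rfl) hs
  rwa [bpsi_zero] at this

lemma bpsi_pos_left {α s : ℝ} (h0 : 0 < α) (h2 : α < 1/2) (hs : 0 < s) (hs' : s ≤ bT α) :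
    0 < bpsi α s := by
  have h1 : α < 1 := by linarith
  have mono : StrictMonoOn (bpsi α) (Set.Icc 0 (bT α)) := by
    apply strictMonoOn_of_deriv_pos (convex_Icc 0 (bT α)) (bpsi_cont h0 h1 _)
    intro x hx
    rw [interior_Icc] at hx
    rw [(hasDerivAt_bpsi h0 h1 x).deriv]
    exact bpsiD_pos_of_mid h0 h2 hx.1 hx.2.le
  have := mono (Set.mem_Icc.mpr ⟨le_rfl, (bT_pos h0 h2).le⟩)
    (Set.mem_Icc.mpr ⟨hs.le, hs'⟩) hs
  rwa [bpsi_zero] at this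

lemma bpsi_neg_right {α s : ℝ} (h0 : 0 < α) (h2 : α < 1/2) (hs : 2 * bT α < s) :
    bpsi α s < 0 := by
  have h1 : α < 1 := by linarith
  have hT := bT_pos h0 h2
  have anti : StrictAntiOn (bpsi α) (Set.Ici (2 * bT α)) := by
    apply strictAntiOn_of_deriv_neg (convex_Ici _) (bpsi_cont h0 h1 _)
    intro x hx
    rw [interior_Ici] at hx
    have hxT : 2 * bT α < x := hx
    rw [(hasDerivAt_bpsi h0 h1 x).deriv]
    have := bpsiD_anti h0 h2 (Set.mem_Ici.mpr (by linarith)) (Set.mem_Ici.mpr (by linarith)) hxT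
    linarith [bpsiD_two_neg h0 h2]
  have := anti (Set.mem_Ici.mpr le_rfl) (Set.mem_Ici.mpr hs.le) hs
  rwa [bpsi_two h0 h2] at this

lemma bpsi_pos_mid {α s : ℝ} (h0 : 0 < α) (h2 : α < 1/2) (hT : bT α < s) (hs : s < 2 * bT α) :
    0 < bpsi α s := by
  have h1 : α < 1 := by linarith
  have hTp := bT_pos h0 h2
  by_contra hcon
  push_neg at hcon
  have hpT : 0 < bpsi α (bT α) := bpsi_pos_left h0 h2 hTp le_rfl
  obtain ⟨c, hc, hceq⟩ := exists_hasDerivAt_eq_slope (bpsi α) (bpsiD α) hT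
    (bpsi_cont h0 h1 _) (fun x _ => hasDerivAt_bpsi h0 h1 x)
  have hcneg : bpsiD α c < 0 := by
    rw [hceq]
    apply div_neg_of_neg_of_pos <;> linarith
  have anti : StrictAntiOn (bpsi α) (Set.Ici c) := by
    apply strictAntiOn_of_deriv_neg (convex_Ici c) (bpsi_cont h0 h1 _)
    intro x hx
    rw [interior_Ici] at hx
    have hxc : c < x := hx
    rw [(hasDerivAt_bpsi h0 h1 x).deriv]
    have := bpsiD_anti h0 h2 (Set.mem_Ici.mpr hc.1.le)
      (Set.mem_Ici.mpr (le_of_lt (lt_trans hc.1 hxc))) hxc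
    linarith
  have := anti (Set.mem_Ici.mpr hc.2.le) (Set.mem_Ici.mpr (by linarith [hc.1, hc.2] : c ≤ 2 * bT α)) hs
  rw [bpsi_two h0 h2] at this
  linarith

lemma bpsi_zero_unique {α s : ℝ} (h0 : 0 < α) (h2 : α < 1/2) (hs : s ≠ 0)
    (h : bpsi α s = 0) : s = 2 * bT α := by
  rcases lt_trichotomy s 0 with hneg | hzero | hpos
  · exact absurd h (ne_of_lt (bpsi_neg_of_neg h0 h2 hneg))
  · exact absurd hzero hs
  · rcases le_or_gt s (bT α) with hle | hgt
    · exact absurd h (ne_of_gt (bpsi_pos_left h0 h2 hpos hle))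
    · rcases lt_trichotomy s (2 * bT α) with hlt | heq | hgt2
      · exact absurd h (ne_of_gt (bpsi_pos_mid h0 h2 hgt hlt))
      · exact heq
      · exact absurd h (ne_of_lt (bpsi_neg_right h0 h2 hgt2))

lemma hasDerivAt_R {α : ℝ} (h0 : 0 < α) (h1 : α < 1) {x : ℝ} (hx : x ≠ 0) :
    HasDerivAt (fun y => 2 * bF α y / y^2) (2 * bpsi α x / x^3) x := by
  have h := ((hasDerivAt_bF h0 h1 x).const_mul 2).div (hasDerivAt_pow 2 x)
    (pow_ne_zero 2 hx)
  refine h.congr_deriv ?_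
  unfold bpsi
  field_simp
  ring

lemma R_two {α : ℝ} (h0 : 0 < α) (h2 : α < 1/2) :
    2 * bF α (2 * bT α) / (2 * bT α)^2 = bb α := by
  have hT := bT_pos h0 h2
  rw [bF_two h0 h2, bb]
  field_simp

lemma bF_le {α : ℝ} (h0 : 0 < α) (h2 : α < 1/2) (s : ℝ) : bF α s ≤ bb α * s^2 / 2 := by
  have h1 : α < 1 := by linarith
  have hT := bT_pos h0 h2
  rcases lt_trichotomy s 0 with hneg | hzero | hpos
  · -- s < 0
    set g : ℝ → ℝ := fun x => bF α x - bb α * x^2 / 2 with hg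
    set gD : ℝ → ℝ := fun x => bp α x - α - bb α * x with hgD
    have hdg : ∀ x, HasDerivAt g (gD x) x := by
      intro x
      have h := (hasDerivAt_bF h0 h1 x).sub
        (((hasDerivAt_pow 2 x).const_mul (bb α)).div_const 2)
      refine h.congr_deriv ?_
      simp [hgD]; ring
    have hdgD : ∀ x, HasDerivAt gD (bp α x * (1 - bp α x) - bb α) x := by
      intro x
      have h := ((hasDerivAt_bp h0 h1 x).sub_const α).sub ((hasDerivAt_id x).const_mul (bb α))
      refine h.congr_deriv ?_
      simp
    have hgAnti : StrictAntiOn gD (Set.Iic 0) := by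
      apply strictAntiOn_of_deriv_neg (convex_Iic 0)
        (fun x _ => (hdgD x).continuousAt.continuousWithinAt)
      intro x hx
      rw [interior_Iic] at hx
      rw [(hdgD x).deriv]
      have hpa : bp α x < α := bp_lt_alpha h0 h1 hx
      have hpp : 0 < bp α x := bp_pos h0 h1 x
      have : bp α x * (1 - bp α x) < α * (1 - α) := by nlinarith
      linarith [alpha_mul_lt_bb h0 h2]
    have hgD0 : gD 0 = 0 := by simp [hgD, bp_zero]
    have hgDpos : 0 < gD s := by
      have := hgAnti (Set.mem_Iic.mpr hneg.le) (Set.mem_Iic.mpr le_rfl) hneg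
      rwa [hgD0] at this
    have hgMono : StrictMonoOn g (Set.Iic 0) := by
      apply strictMonoOn_of_deriv_pos (convex_Iic 0)
        (fun x _ => (hdg x).continuousAt.continuousWithinAt)
      intro x hx
      rw [interior_Iic] at hx
      rw [(hdg x).deriv]
      have := hgAnti (Set.mem_Iic.mpr (le_of_lt hx)) (Set.mem_Iic.mpr le_rfl) hx
      rwa [hgD0] at this
    have := hgMono (Set.mem_Iic.mpr hneg.le) (Set.mem_Iic.mpr le_rfl) hneg
    have hg0 : g 0 = 0 := by simp [hg, bF_zero]
    rw [hg0] at this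
    simp only [hg] at this
    linarith
  · rw [hzero, bF_zero]; simp
  · -- s > 0
    set R : ℝ → ℝ := fun y => 2 * bF α y / y^2 with hR
    have hRmono : StrictMonoOn R (Set.Ioc 0 (2 * bT α)) := by
      apply strictMonoOn_of_deriv_pos (convex_Ioc 0 (2 * bT α))
        (fun x hx => (hasDerivAt_R h0 h1 (ne_of_gt hx.1)).continuousAt.continuousWithinAt)
      intro x hx
      rw [interior_Ioc] at hx
      rw [(hasDerivAt_R h0 h1 (ne_of_gt hx.1)).deriv]
      have hpsi : 0 < bpsi α x := by
        rcases le_or_gt x (bT α) with hle | hgt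
        · exact bpsi_pos_left h0 h2 hx.1 hle
        · exact bpsi_pos_mid h0 h2 hgt hx.2
      have hx0 := hx.1
      exact div_pos (by linarith) (pow_pos hx0 3)
    have hRanti : StrictAntiOn R (Set.Ici (2 * bT α)) := by
      apply strictAntiOn_of_deriv_neg (convex_Ici _)
        (fun x hx => (hasDerivAt_R h0 h1
          (ne_of_gt (lt_of_lt_of_le (by linarith) hx))).continuousAt.continuousWithinAt)
      intro x hx
      rw [interior_Ici] at hx
      have hx2 : 2 * bT α < x := hx
      have hx0 : 0 < x := by linarith
      rw [(hasDerivAt_R h0 h1 (ne_of_gt hx0)).deriv]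
      have hpsi : bpsi α x < 0 := bpsi_neg_right h0 h2 hx2
      have hx3 : 0 < x^3 := by positivity
      exact div_neg_of_neg_of_pos (by linarith) hx3
    have hRle : R s ≤ bb α := by
      rcases le_or_gt s (2 * bT α) with hle | hgt
      · rcases eq_or_lt_of_le hle with heq | hlt
        · rw [heq]
          simp only [hR]
          rw [R_two h0 h2]
        · have := hRmono (Set.mem_Ioc.mpr ⟨hpos, hle⟩)
            (Set.mem_Ioc.mpr ⟨by linarith, le_rfl⟩) hlt
          simp only [hR] at this
          rw [R_two h0 h2] at this
          exact this.le
      · have := hRanti (Set.mem_Ici.mpr le_rfl) (Set.mem_Ici.mpr hgt.le) hgt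
        simp only [hR] at this
        rw [R_two h0 h2] at this
        exact this.le
    have hs2 : (0:ℝ) < s^2 := by positivity
    simp only [hR] at hRle
    rw [div_le_iff₀ hs2] at hRle
    linarith

lemma integrable_dirac_real {f : ℝ → ℝ} (hf : Measurable f) (a : ℝ) :
    Integrable f (Measure.dirac a) := by
  constructor
  · exact hf.aestronglyMeasurable
  · simp [HasFiniteIntegral, lintegral_dirac]

lemma bernoulli_integral {α : ℝ} (h0 : 0 ≤ α) (h1 : α ≤ 1) {f : ℝ → ℝ} (hf : Measurable f) :
    ∫ ω, f ω ∂(bernoulliMeasure α) = α * f 1 + (1 - α) * f 0 := by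
  have i1 : Integrable f ((ENNReal.ofReal α) • Measure.dirac (1:ℝ)) :=
    (integrable_dirac_real hf 1).smul_measure ENNReal.ofReal_ne_top
  have i0 : Integrable f ((ENNReal.ofReal (1-α)) • Measure.dirac (0:ℝ)) :=
    (integrable_dirac_real hf 0).smul_measure ENNReal.ofReal_ne_top
  rw [bernoulliMeasure, integral_add_measure i1 i0, integral_smul_measure,
    integral_smul_measure, integral_dirac, integral_dirac,
    ENNReal.toReal_ofReal h0, ENNReal.toReal_ofReal (by linarith : (0:ℝ) ≤ 1 - α)]
  simp [smul_eq_mul]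

lemma bernoulli_mean {α : ℝ} (h0 : 0 ≤ α) (h1 : α ≤ 1) :
    ∫ ω', id ω' ∂(bernoulliMeasure α) = α := by
  rw [bernoulli_integral h0 h1 measurable_id]
  simp

lemma exp_bCGF_pos {α : ℝ} (h0 : 0 < α) (h1 : α < 1) (s : ℝ) :
    0 < α * Real.exp (s * (1 - α)) + (1 - α) * Real.exp (-s * α) :=
  add_pos (mul_pos h0 (Real.exp_pos _)) (mul_pos (by linarith) (Real.exp_pos _))

lemma bernoulli_mgf {α : ℝ} (h0 : 0 < α) (h1 : α < 1) (s : ℝ) :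
    ∫ ω, Real.exp (s * (ω - α)) ∂(bernoulliMeasure α) = Real.exp (bF α s) := by
  have hm : Measurable fun ω : ℝ => Real.exp (s * (ω - α)) :=
    ((measurable_id.sub measurable_const).const_mul s).exp
  rw [bernoulli_integral h0.le h1.le hm, ← bCGF_eq h0 h1, bernoulliCGF,
      Real.exp_log (exp_bCGF_pos h0 h1 s)]
  have h : s * ((0:ℝ) - α) = -s * α := by ring
  rw [h]

lemma subGaussianNorm_eq {α : ℝ} (h0 : 0 < α) (h2 : α < 1/2) :
    subGaussianNorm (bernoulliMeasure α) id = Real.sqrt (bb α) := by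
  have h1 : α < 1 := by linarith
  have hT := bT_pos h0 h2
  have hbb := bb_pos h0 h2
  have hmean : ∫ ω', id ω' ∂(bernoulliMeasure α) = α := bernoulli_mean h0.le h1.le
  have hint : ∀ s : ℝ, ∫ ω, Real.exp (s * (id ω - ∫ ω', id ω' ∂(bernoulliMeasure α)))
      ∂(bernoulliMeasure α) = Real.exp (bF α s) := by
    intro s
    rw [hmean]
    simp only [id_eq]
    exact bernoulli_mgf h0 h1 s
  unfold subGaussianNorm
  have hmem : Real.sqrt (bb α) ∈ {σ : ℝ | 0 < σ ∧ ∀ s : ℝ,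
      ∫ ω, Real.exp (s * (id ω - ∫ ω', id ω' ∂(bernoulliMeasure α))) ∂(bernoulliMeasure α)
        ≤ Real.exp (σ ^ 2 * s ^ 2 / 2)} := by
    constructor
    · exact Real.sqrt_pos.mpr hbb
    · intro s
      rw [hint s, Real.sq_sqrt hbb.le]
      exact Real.exp_le_exp.mpr (by have := bF_le h0 h2 s; linarith)
  have hlb : ∀ σ ∈ {σ : ℝ | 0 < σ ∧ ∀ s : ℝ,
      ∫ ω, Real.exp (s * (id ω - ∫ ω', id ω' ∂(bernoulliMeasure α))) ∂(bernoulliMeasure α)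
        ≤ Real.exp (σ ^ 2 * s ^ 2 / 2)}, Real.sqrt (bb α) ≤ σ := by
    rintro σ ⟨hσ, hall⟩
    have hkey := hall (2 * bT α)
    rw [hint, Real.exp_le_exp, bF_two h0 h2] at hkey
    have hσ2 : bb α ≤ σ^2 := by
      rw [bb, div_le_iff₀ (by linarith : (0:ℝ) < 2 * bT α)]
      nlinarith [hkey]
    calc Real.sqrt (bb α) ≤ Real.sqrt (σ^2) := Real.sqrt_le_sqrt hσ2
      _ = σ := Real.sqrt_sq hσ.le
  exact le_antisymm (csInf_le ⟨Real.sqrt (bb α), hlb⟩ hmem) (le_csInf ⟨_, hmem⟩ hlb)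

/-- For `0 < α < 1/2`, besides the trivial solutions `(σ, 0)`, the system
`f(s) = σ² s² / 2`, `f'(s) = σ² s` has exactly one solution `(σ*, s*)` with `σ* > 0` and
`s* ≠ 0`; moreover `s* > 0` and the sub-Gaussian norm of a Bernoulli(α) random variable
equals `σ*`. -/
theorem bernoulli_norm_characterization (α : ℝ) (hα₀ : 0 < α) (hα : α < 1 / 2) :
    ∃ p : ℝ × ℝ,
      (0 < p.1 ∧ p.2 ≠ 0 ∧ bernoulliCGF α p.2 = p.1 ^ 2 * p.2 ^ 2 / 2 ∧
        deriv (bernoulliCGF α) p.2 = p.1 ^ 2 * p.2) ∧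
      (∀ q : ℝ × ℝ,
        (0 < q.1 ∧ q.2 ≠ 0 ∧ bernoulliCGF α q.2 = q.1 ^ 2 * q.2 ^ 2 / 2 ∧
          deriv (bernoulliCGF α) q.2 = q.1 ^ 2 * q.2) → q = p) ∧
      0 < p.2 ∧ subGaussianNorm (bernoulliMeasure α) id = p.1 := by
  have h2 : α < 1/2 := hα
  have h1 : α < 1 := by linarith
  have hT := bT_pos hα₀ h2
  have hbb := bb_pos hα₀ h2
  have hcgf := bCGF_eq hα₀ h1
  have hsq : Real.sqrt (bb α) ^ 2 = bb α := Real.sq_sqrt hbb.le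
  refine ⟨(Real.sqrt (bb α), 2 * bT α), ⟨Real.sqrt_pos.mpr hbb,
    ne_of_gt (by show (0:ℝ) < 2 * bT α; linarith), ?_, ?_⟩, ?_, by show (0:ℝ) < 2 * bT α; linarith, subGaussianNorm_eq hα₀ h2⟩
  · show bernoulliCGF α (2 * bT α) = _
    rw [hcgf, bF_two hα₀ h2]
    simp only [hsq]
    rw [bb]
    field_simp
  · show deriv (bernoulliCGF α) (2 * bT α) = _
    rw [hcgf, (hasDerivAt_bF hα₀ h1 _).deriv, bp_two hα₀ h2]
    simp only [hsq]
    rw [bb]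
    field_simp
    ring
  · rintro ⟨σ, s⟩ ⟨hσ, hs, he1, he2⟩
    simp only at hσ hs he1 he2
    rw [hcgf] at he1 he2
    have hd : bp α s - α = σ^2 * s := by
      rw [← (hasDerivAt_bF hα₀ h1 s).deriv]; exact he2
    have hpsi0 : bpsi α s = 0 := by
      unfold bpsi
      rw [hd, he1]
      ring
    have hs2 : s = 2 * bT α := bpsi_zero_unique hα₀ h2 hs hpsi0
    rw [hs2, bF_two hα₀ h2] at he1
    have hσ2 : σ^2 = bb α := by
      rw [bb, eq_div_iff (by linarith : (2:ℝ) * bT α ≠ 0)]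
      nlinarith [he1]
    have hσeq : σ = Real.sqrt (bb α) := by
      rw [← hσ2, Real.sqrt_sq hσ.le]
    simp only [Prod.mk.injEq]
    exact ⟨hσeq, hs2⟩
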